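/- The level-6 principal congruence subgroup Γ_6(2) of SL(2,ℤ) is equal to the subgroup of SL(2,ℤ) generated by e_{21}^6, the matrices e_{21}^m e_{12}^6 e_{21}^{−m} for 0 ≤ m ≤ 5, and the matrices e_{21}^m [e_{21}^{δ}, e_{12}^{ε}] e_{21}^{−m} for 0 ≤ m ≤ 5, δ ∈ {3, −3} and ε ∈ {2, −2}, where [a,b] = a b a^{−1} b^{−1} denotes the commutator. -/

import Mathlib

open Matrix
open scoped commutatorElement

abbrev SLZ2 := Matrix.SpecialLinearGroup (Fin 2) ℤ

/-- The level-`d` principal congruence subgroup of `SL(2, ℤ)`: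
the kernel of the reduction map `SL(2, ℤ) → SL(2, ℤ/dℤ)`. -/
def Gamma (d : ℕ) : Subgroup SLZ2 :=
  (Matrix.SpecialLinearGroup.map (n := Fin 2) (Int.castRingHom (ZMod d))).ker

/-- The elementary matrix `e_{ij} ∈ SL(2, ℤ)` (junk value `1` if `i = j`). -/
def E (i j : Fin 2) : SLZ2 :=
  if h : i ≠ j then ⟨Matrix.transvection i j 1, Matrix.det_transvection_of_ne i j h 1⟩ else 1

namespace GammaSixProof

lemma coe_E10 : ((E 1 0 : SLZ2) : Matrix (Fin 2) (Fin 2) ℤ) = !![1,0;1,1] := by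
  rw [E]
  norm_num [Matrix.transvection]
  ext i j
  fin_cases i <;> fin_cases j <;> simp [Matrix.single, Matrix.one_apply]

lemma coe_E01 : ((E 0 1 : SLZ2) : Matrix (Fin 2) (Fin 2) ℤ) = !![1,1;0,1] := by
  rw [E]
  norm_num [Matrix.transvection]
  ext i j
  fin_cases i <;> fin_cases j <;> simp [Matrix.single, Matrix.one_apply]

lemma sq_zero_mul (P : Matrix (Fin 2) (Fin 2) ℤ) (hP : P * P = 0) (x y : ℤ) :
    (1 + x • P) * (1 + y • P) = 1 + (x + y) • P := by
  simp only [add_mul, mul_add, one_mul, mul_one, smul_mul_smul_comm, hP, smul_zero, add_smul]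
  abel

lemma coe_inv_para (A : SLZ2) (P : Matrix (Fin 2) (Fin 2) ℤ) (hP : P * P = 0)
    (h : (A : Matrix (Fin 2) (Fin 2) ℤ) = 1 + P) :
    ((A⁻¹ : SLZ2) : Matrix (Fin 2) (Fin 2) ℤ) = 1 + (-1 : ℤ) • P := by
  have h2 : (A : Matrix (Fin 2) (Fin 2) ℤ) * (1 + (-1 : ℤ) • P) = 1 := by
    rw [h]
    have := sq_zero_mul P hP 1 (-1)
    simpa using this
  calc ((A⁻¹ : SLZ2) : Matrix (Fin 2) (Fin 2) ℤ)
      = ((A⁻¹ : SLZ2) : Matrix (Fin 2) (Fin 2) ℤ) *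
        ((A : Matrix (Fin 2) (Fin 2) ℤ) * (1 + (-1:ℤ) • P)) := by
        rw [h2, mul_one]
    _ = (((A⁻¹ * A : SLZ2)) : Matrix (Fin 2) (Fin 2) ℤ) * (1 + (-1:ℤ) • P) := by
        rw [Matrix.SpecialLinearGroup.coe_mul, mul_assoc]
    _ = 1 + (-1:ℤ) • P := by simp

lemma coe_pow_para (A : SLZ2) (P : Matrix (Fin 2) (Fin 2) ℤ) (hP : P * P = 0)
    (h : (A : Matrix (Fin 2) (Fin 2) ℤ) = 1 + P) (n : ℕ) :
    ((A ^ n : SLZ2) : Matrix (Fin 2) (Fin 2) ℤ) = 1 + (n : ℤ) • P := by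
  induction n with
  | zero => simp
  | succ n ih =>
      have : ((A ^ (n+1) : SLZ2) : Matrix (Fin 2) (Fin 2) ℤ)
          = ((A ^ n : SLZ2) : Matrix (Fin 2) (Fin 2) ℤ) * (A : Matrix (Fin 2) (Fin 2) ℤ) := by
        rw [pow_succ]; rfl
      rw [this, ih, h]
      have hone : (1 : Matrix (Fin 2) (Fin 2) ℤ) + P = 1 + (1:ℤ) • P := by simp
      rw [hone, sq_zero_mul P hP]
      push_cast
      ring_nf

lemma coe_zpow_para (A : SLZ2) (P : Matrix (Fin 2) (Fin 2) ℤ) (hP : P * P = 0)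
    (h : (A : Matrix (Fin 2) (Fin 2) ℤ) = 1 + P) (k : ℤ) :
    ((A ^ k : SLZ2) : Matrix (Fin 2) (Fin 2) ℤ) = 1 + k • P := by
  cases k with
  | ofNat n => rw [Int.ofNat_eq_coe, zpow_natCast]; exact coe_pow_para A P hP h n
  | negSucc n =>
      rw [zpow_negSucc]
      have hQ : ((n:ℤ)+1) • P * (((n:ℤ)+1) • P) = 0 := by
        rw [smul_mul_smul_comm, hP, smul_zero]
      have hpow : ((A ^ (n+1) : SLZ2) : Matrix (Fin 2) (Fin 2) ℤ) = 1 + ((n:ℤ)+1) • P := by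
        rw [coe_pow_para A P hP h (n+1)]; push_cast; ring_nf
      have := coe_inv_para (A ^ (n+1)) (((n:ℤ)+1) • P) hQ hpow
      rw [this, smul_smul]
      congr 1
      rw [Int.negSucc_eq]
      ring_nf

lemma one_add_smul_fin2 (k p q r s : ℤ) :
    (1 : Matrix (Fin 2) (Fin 2) ℤ) + k • !![p,q;r,s] = !![1+k*p, k*q; k*r, 1+k*s] := by
  ext i j
  fin_cases i <;> fin_cases j <;> simp [Matrix.one_apply]

lemma coe_T_zpow (k : ℤ) : ((E 1 0 ^ k : SLZ2) : Matrix (Fin 2) (Fin 2) ℤ) = !![1,0;k,1] := by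
  rw [coe_zpow_para (E 1 0) !![0,0;1,0]
    (by ext i j; fin_cases i <;> fin_cases j <;> simp [Matrix.mul_apply, Fin.sum_univ_two])
    (by rw [coe_E10]; ext i j; fin_cases i <;> fin_cases j <;> simp [Matrix.one_apply]),
    one_add_smul_fin2]
  norm_num

lemma coe_S_zpow (k : ℤ) : ((E 0 1 ^ k : SLZ2) : Matrix (Fin 2) (Fin 2) ℤ) = !![1,k;0,1] := by
  rw [coe_zpow_para (E 0 1) !![0,1;0,0]
    (by ext i j; fin_cases i <;> fin_cases j <;> simp [Matrix.mul_apply, Fin.sum_univ_two])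
    (by rw [coe_E01]; ext i j; fin_cases i <;> fin_cases j <;> simp [Matrix.one_apply]),
    one_add_smul_fin2]
  norm_num

lemma coe_T_pow (n : ℕ) : ((E 1 0 ^ n : SLZ2) : Matrix (Fin 2) (Fin 2) ℤ) = !![1,0;(n:ℤ),1] := by
  rw [← zpow_natCast]; exact coe_T_zpow n

lemma coe_S_pow (n : ℕ) : ((E 0 1 ^ n : SLZ2) : Matrix (Fin 2) (Fin 2) ℤ) = !![1,(n:ℤ);0,1] := by
  rw [← zpow_natCast]; exact coe_S_zpow n

/-- parabolic fixing the cusp 3 -/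
def g3 : SLZ2 := ⟨!![7,-18;2,-5], by norm_num [Matrix.det_fin_two_of]⟩

/-- parabolic fixing the cusp -3 -/
def g4 : SLZ2 := ⟨!![-5,-18;2,7], by norm_num [Matrix.det_fin_two_of]⟩

lemma coe_g3_zpow (k : ℤ) :
    ((g3 ^ k : SLZ2) : Matrix (Fin 2) (Fin 2) ℤ) = !![1+6*k, -18*k; 2*k, 1-6*k] := by
  rw [coe_zpow_para g3 !![6,-18;2,-6]
    (by ext i j; fin_cases i <;> fin_cases j <;> simp [Matrix.mul_apply, Fin.sum_univ_two])
    (by show !![7,-18;2,-5] = _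
        ext i j; fin_cases i <;> fin_cases j <;> simp [Matrix.one_apply]),
    one_add_smul_fin2]
  ext i j
  fin_cases i <;> fin_cases j <;> simp <;> ring

lemma coe_g4_zpow (k : ℤ) :
    ((g4 ^ k : SLZ2) : Matrix (Fin 2) (Fin 2) ℤ) = !![1-6*k, -18*k; 2*k, 1+6*k] := by
  rw [coe_zpow_para g4 !![-6,-18;2,6]
    (by ext i j; fin_cases i <;> fin_cases j <;> simp [Matrix.mul_apply, Fin.sum_univ_two])
    (by show !![-5,-18;2,7] = _
        ext i j; fin_cases i <;> fin_cases j <;> simp [Matrix.one_apply]),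
    one_add_smul_fin2]
  ext i j
  fin_cases i <;> fin_cases j <;> simp <;> ring


def gens : Set SLZ2 :=
  ({(E 1 0) ^ 6} ∪
   {x : SLZ2 | ∃ m : ℕ, m ≤ 5 ∧
      x = (E 1 0) ^ m * (E 0 1) ^ 6 * ((E 1 0) ^ m)⁻¹} ∪
   {x : SLZ2 | ∃ m : ℕ, m ≤ 5 ∧ ∃ δ ε : ℤ,
      (δ = 3 ∨ δ = -3) ∧ (ε = 2 ∨ ε = -2) ∧
      x = (E 1 0) ^ m * ⁅(E 1 0) ^ δ, (E 0 1) ^ ε⁆ * ((E 1 0) ^ m)⁻¹})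

def Hgrp : Subgroup SLZ2 := Subgroup.closure gens

def Kgrp : Subgroup SLZ2 := Subgroup.closure (insert (E 1 0) gens)

lemma t6_mem_gens : (E 1 0) ^ 6 ∈ gens :=
  Set.mem_union_left _ (Set.mem_union_left _ rfl)

lemma conj_s6_mem_gens {m : ℕ} (hm : m ≤ 5) :
    (E 1 0) ^ m * (E 0 1) ^ 6 * ((E 1 0) ^ m)⁻¹ ∈ gens :=
  Set.mem_union_left _ (Set.mem_union_right _ ⟨m, hm, rfl⟩)

lemma s6_mem_gens : (E 0 1) ^ 6 ∈ gens := by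
  have := conj_s6_mem_gens (m := 0) (by norm_num)
  simpa using this

lemma conj_comm_mem_gens {m : ℕ} (hm : m ≤ 5) {δ ε : ℤ}
    (hδ : δ = 3 ∨ δ = -3) (hε : ε = 2 ∨ ε = -2) :
    (E 1 0) ^ m * ⁅(E 1 0) ^ δ, (E 0 1) ^ ε⁆ * ((E 1 0) ^ m)⁻¹ ∈ gens :=
  Set.mem_union_right _ ⟨m, hm, δ, ε, hδ, hε, rfl⟩

lemma comm_mem_gens {δ ε : ℤ} (hδ : δ = 3 ∨ δ = -3) (hε : ε = 2 ∨ ε = -2) :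
    ⁅(E 1 0) ^ δ, (E 0 1) ^ ε⁆ ∈ gens := by
  have := conj_comm_mem_gens (m := 0) (by norm_num) hδ hε
  simpa using this

lemma T_mem_K : E 1 0 ∈ Kgrp := Subgroup.subset_closure (Set.mem_insert _ _)

lemma gens_subset_K : gens ⊆ (Kgrp : Set SLZ2) :=
  fun _ hx => Subgroup.subset_closure (Set.mem_insert_of_mem _ hx)

lemma S6_mem_K : (E 0 1) ^ 6 ∈ Kgrp := gens_subset_K s6_mem_gens

/-- the auxiliary element `A = s² t³ s⁻²` -/
def Ael : SLZ2 := (E 1 0) ^ 3 * ⁅(E 1 0) ^ (-3 : ℤ), (E 0 1) ^ (2 : ℤ)⁆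

lemma Ael_mem_K : Ael ∈ Kgrp :=
  mul_mem (pow_mem T_mem_K 3) (gens_subset_K (comm_mem_gens (Or.inr rfl) (Or.inl rfl)))

lemma coe_Ael : ((Ael : SLZ2) : Matrix (Fin 2) (Fin 2) ℤ) = !![7,-12;3,-5] := by
  have h1 : ((E 1 0 : SLZ2) ^ (-3:ℤ))⁻¹ = (E 1 0) ^ (3:ℤ) := by group
  have h2 : ((E 0 1 : SLZ2) ^ (2:ℤ))⁻¹ = (E 0 1) ^ (-2:ℤ) := by group
  rw [Ael, commutatorElement_def, h1, h2]
  rw [show ((E 1 0)^3 * ((E 1 0)^(-3:ℤ) * (E 0 1)^(2:ℤ) * (E 1 0)^(3:ℤ) * (E 0 1)^(-2:ℤ)) :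
        SLZ2) = ((E 1 0)^3 * (E 1 0)^(-3:ℤ)) * (E 0 1)^(2:ℤ) * (E 1 0)^(3:ℤ) * (E 0 1)^(-2:ℤ)
      from by group]
  simp only [Matrix.SpecialLinearGroup.coe_mul, coe_T_pow, coe_T_zpow, coe_S_zpow]
  norm_num [Matrix.mul_fin_two]

lemma g3_mem_K : g3 ∈ Kgrp := by
  have hEq : g3 * Ael * (E 1 0) = (E 0 1) ^ 6 := by
    apply Subtype.ext
    show ((g3 * Ael * (E 1 0) : SLZ2) : Matrix (Fin 2) (Fin 2) ℤ) = _
    simp only [Matrix.SpecialLinearGroup.coe_mul, coe_Ael, coe_E10, coe_S_pow]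
    show (!![7,-18;2,-5] : Matrix (Fin 2) (Fin 2) ℤ) * _ * _ = _
    norm_num [Matrix.mul_fin_two]
  have hg : g3 = (E 0 1) ^ 6 * (E 1 0)⁻¹ * Ael⁻¹ := by
    rw [← hEq]; group
  rw [hg]
  exact mul_mem (mul_mem S6_mem_K (inv_mem T_mem_K)) (inv_mem Ael_mem_K)

lemma g4_mem_K : g4 ∈ Kgrp := by
  have hEq : Ael * (E 1 0) * g4 = (E 0 1) ^ 6 := by
    apply Subtype.ext
    show ((Ael * (E 1 0) * g4 : SLZ2) : Matrix (Fin 2) (Fin 2) ℤ) = _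
    simp only [Matrix.SpecialLinearGroup.coe_mul, coe_Ael, coe_E10, coe_S_pow]
    show _ * _ * (!![-5,-18;2,7] : Matrix (Fin 2) (Fin 2) ℤ) = _
    norm_num [Matrix.mul_fin_two]
  have hg : g4 = (E 1 0)⁻¹ * Ael⁻¹ * (E 0 1) ^ 6 := by
    rw [← hEq]; group
  rw [hg]
  exact mul_mem (mul_mem (inv_mem T_mem_K) (inv_mem Ael_mem_K)) S6_mem_K



lemma int_cast_one_iff (a : ℤ) : ((a : ZMod 6) = 1) ↔ (6:ℤ) ∣ a - 1 := by
  rw [← sub_eq_zero, show ((a : ZMod 6) - 1) = ((a - 1 : ℤ) : ZMod 6) by push_cast; ring,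
    ZMod.intCast_zmod_eq_zero_iff_dvd]
  norm_num

lemma int_cast_zero_iff (a : ℤ) : ((a : ZMod 6) = 0) ↔ (6:ℤ) ∣ a := by
  rw [ZMod.intCast_zmod_eq_zero_iff_dvd]; norm_num

lemma mem_Gamma6_iff (M : SLZ2) :
    M ∈ Gamma 6 ↔ ((6:ℤ) ∣ ((M : Matrix (Fin 2) (Fin 2) ℤ) 0 0 - 1) ∧
      (6:ℤ) ∣ (M : Matrix (Fin 2) (Fin 2) ℤ) 0 1 ∧
      (6:ℤ) ∣ (M : Matrix (Fin 2) (Fin 2) ℤ) 1 0 ∧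
      (6:ℤ) ∣ ((M : Matrix (Fin 2) (Fin 2) ℤ) 1 1 - 1)) := by
  rw [Gamma, MonoidHom.mem_ker, Matrix.SpecialLinearGroup.ext_iff]
  constructor
  · intro h
    refine ⟨?_, ?_, ?_, ?_⟩
    · have := h 0 0
      simp [Matrix.SpecialLinearGroup.map_apply_coe, Matrix.one_apply] at this
      rwa [int_cast_one_iff] at this
    · have := h 0 1
      simp [Matrix.SpecialLinearGroup.map_apply_coe, Matrix.one_apply] at this
      rwa [int_cast_zero_iff] at this
    · have := h 1 0
      simp [Matrix.SpecialLinearGroup.map_apply_coe, Matrix.one_apply] at this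
      rwa [int_cast_zero_iff] at this
    · have := h 1 1
      simp [Matrix.SpecialLinearGroup.map_apply_coe, Matrix.one_apply] at this
      rwa [int_cast_one_iff] at this
  · rintro ⟨h1, h2, h3, h4⟩ i j
    fin_cases i <;> fin_cases j <;>
      simp [Matrix.SpecialLinearGroup.map_apply_coe, Matrix.one_apply] <;>
      [skip; rw [int_cast_zero_iff]; rw [int_cast_zero_iff]; skip] <;>
      first
        | assumption
        | (rw [int_cast_one_iff]; assumption)

def Lgrp : Subgroup SLZ2 where
  carrier := {M : SLZ2 | (6:ℤ) ∣ ((M : Matrix (Fin 2) (Fin 2) ℤ) 0 0 - 1) ∧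
      (6:ℤ) ∣ (M : Matrix (Fin 2) (Fin 2) ℤ) 0 1 ∧
      (6:ℤ) ∣ ((M : Matrix (Fin 2) (Fin 2) ℤ) 1 1 - 1)}
  one_mem' := by
    refine ⟨?_, ?_, ?_⟩ <;> simp [Matrix.SpecialLinearGroup.coe_one, Matrix.one_apply]
  mul_mem' := by
    rintro A B ⟨⟨x,hx⟩,⟨y,hy⟩,⟨z,hz⟩⟩ ⟨⟨u,hu⟩,⟨v,hv⟩,⟨w,hw⟩⟩
    have e00 : ((A * B : SLZ2) : Matrix (Fin 2) (Fin 2) ℤ) 0 0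
        = (A : Matrix (Fin 2) (Fin 2) ℤ) 0 0 * (B : Matrix (Fin 2) (Fin 2) ℤ) 0 0
          + (A : Matrix (Fin 2) (Fin 2) ℤ) 0 1 * (B : Matrix (Fin 2) (Fin 2) ℤ) 1 0 := by
      simp [Matrix.SpecialLinearGroup.coe_mul, Matrix.mul_apply, Fin.sum_univ_two]
    have e01 : ((A * B : SLZ2) : Matrix (Fin 2) (Fin 2) ℤ) 0 1
        = (A : Matrix (Fin 2) (Fin 2) ℤ) 0 0 * (B : Matrix (Fin 2) (Fin 2) ℤ) 0 1
          + (A : Matrix (Fin 2) (Fin 2) ℤ) 0 1 * (B : Matrix (Fin 2) (Fin 2) ℤ) 1 1 := by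
      simp [Matrix.SpecialLinearGroup.coe_mul, Matrix.mul_apply, Fin.sum_univ_two]
    have e11 : ((A * B : SLZ2) : Matrix (Fin 2) (Fin 2) ℤ) 1 1
        = (A : Matrix (Fin 2) (Fin 2) ℤ) 1 0 * (B : Matrix (Fin 2) (Fin 2) ℤ) 0 1
          + (A : Matrix (Fin 2) (Fin 2) ℤ) 1 1 * (B : Matrix (Fin 2) (Fin 2) ℤ) 1 1 := by
      simp [Matrix.SpecialLinearGroup.coe_mul, Matrix.mul_apply, Fin.sum_univ_two]
    refine ⟨⟨x * (B : Matrix (Fin 2) (Fin 2) ℤ) 0 0 + u + y * (B : Matrix (Fin 2) (Fin 2) ℤ) 1 0, ?_⟩,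
      ⟨v * (A : Matrix (Fin 2) (Fin 2) ℤ) 0 0 + y * (B : Matrix (Fin 2) (Fin 2) ℤ) 1 1, ?_⟩,
      ⟨z * (B : Matrix (Fin 2) (Fin 2) ℤ) 1 1 + w + v * (A : Matrix (Fin 2) (Fin 2) ℤ) 1 0, ?_⟩⟩
    · rw [e00]; linear_combination (B : Matrix (Fin 2) (Fin 2) ℤ) 0 0 * hx + hu
        + (B : Matrix (Fin 2) (Fin 2) ℤ) 1 0 * hy
    · rw [e01]; linear_combination (A : Matrix (Fin 2) (Fin 2) ℤ) 0 0 * hv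
        + (B : Matrix (Fin 2) (Fin 2) ℤ) 1 1 * hy
    · rw [e11]; linear_combination (B : Matrix (Fin 2) (Fin 2) ℤ) 1 1 * hz + hw
        + (A : Matrix (Fin 2) (Fin 2) ℤ) 1 0 * hv
  inv_mem' := by
    rintro A ⟨hx, hy, hz⟩
    rw [Matrix.SpecialLinearGroup.SL2_inv_expl A]
    refine ⟨?_, ?_, ?_⟩ <;> simp
    · exact hz
    · exact hy
    · exact hx

lemma mem_Lgrp (M : SLZ2) : M ∈ Lgrp ↔ ((6:ℤ) ∣ ((M : Matrix (Fin 2) (Fin 2) ℤ) 0 0 - 1) ∧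
      (6:ℤ) ∣ (M : Matrix (Fin 2) (Fin 2) ℤ) 0 1 ∧
      (6:ℤ) ∣ ((M : Matrix (Fin 2) (Fin 2) ℤ) 1 1 - 1)) := Iff.rfl

lemma Tk_mem_L (k : ℤ) : (E 1 0) ^ k ∈ Lgrp := by
  rw [mem_Lgrp, coe_T_zpow]
  norm_num

lemma S6k_mem_L (k : ℤ) : (E 0 1) ^ ((6:ℤ) * k) ∈ Lgrp := by
  rw [mem_Lgrp, coe_S_zpow]
  norm_num

lemma g3k_mem_L (k : ℤ) : g3 ^ k ∈ Lgrp := by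
  rw [mem_Lgrp, coe_g3_zpow]
  norm_num
  exact ⟨3*k, by ring⟩

lemma g4k_mem_L (k : ℤ) : g4 ^ k ∈ Lgrp := by
  rw [mem_Lgrp, coe_g4_zpow]
  norm_num
  exact ⟨3*k, by ring⟩

lemma exists_near (x d : ℤ) (hd : d ≠ 0) :
    ∃ k : ℤ, 2 * (x + d * k).natAbs ≤ d.natAbs := by
  have core : ∀ e : ℤ, 0 < e → ∃ k : ℤ, 2 * (x + e * k).natAbs ≤ e.natAbs := by
    intro e he
    have h1 : x % e = x - e * (x / e) := Int.emod_def x e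
    have h2 : 0 ≤ x % e := Int.emod_nonneg x (ne_of_gt he)
    have h3 : x % e < e := Int.emod_lt_of_pos x he
    by_cases hcase : 2 * (x % e) ≤ e
    · refine ⟨-(x / e), ?_⟩
      have hv : x + e * (-(x / e)) = x % e := by rw [h1]; ring
      rw [hv]; omega
    · refine ⟨-(x / e) - 1, ?_⟩
      have hv : x + e * (-(x / e) - 1) = x % e - e := by rw [h1]; ring
      rw [hv]; omega
  rcases hd.lt_or_gt with h | h
  · obtain ⟨k, hk⟩ := core (-d) (by omega)
    refine ⟨-k, ?_⟩
    rw [show x + d * (-k) = x + (-d) * k by ring]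
    omega
  · exact core d h

lemma zones (a' c : ℤ) (hc : c ≠ 0) (h6 : (6:ℤ) ∣ a' - 1)
    (hb : 2 * a'.natAbs ≤ (6*c).natAbs)
    (e2 : a' ≠ 2*c) (e2' : a' ≠ -2*c) (e3 : a' ≠ 3*c) (e3' : a' ≠ -3*c) :
    (0 < a'.natAbs ∧ a'.natAbs < 2 * c.natAbs)
    ∨ (0 < (a' - 3*c).natAbs ∧ (a' - 3*c).natAbs < c.natAbs)
    ∨ (0 < (a' + 3*c).natAbs ∧ (a' + 3*c).natAbs < c.natAbs) := by
  omega



lemma L_le_K_aux : ∀ n : ℕ, ∀ M : SLZ2, M ∈ Lgrp →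
    ((M : Matrix (Fin 2) (Fin 2) ℤ) 1 0).natAbs = n → M ∈ Kgrp := by
  intro n
  induction n using Nat.strong_induction_on with
  | _ n ih =>
  intro M hM hn
  obtain ⟨h00, h01, h11⟩ := (mem_Lgrp M).mp hM
  have hdet : ((M : SLZ2) : Matrix (Fin 2) (Fin 2) ℤ).det = 1 := M.prop
  rw [Matrix.det_fin_two] at hdet
  by_cases hc : (M : Matrix (Fin 2) (Fin 2) ℤ) 1 0 = 0
  · -- base case : c = 0
    have had : (M : Matrix (Fin 2) (Fin 2) ℤ) 0 0 * (M : Matrix (Fin 2) (Fin 2) ℤ) 1 1 = 1 := by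
      rw [hc] at hdet; linear_combination hdet
    have ha1 : (M : Matrix (Fin 2) (Fin 2) ℤ) 0 0 = 1 := by
      rcases Int.eq_one_or_neg_one_of_mul_eq_one had with h | h
      · exact h
      · omega
    have hd1 : (M : Matrix (Fin 2) (Fin 2) ℤ) 1 1 = 1 := by
      rw [ha1, one_mul] at had; exact had
    obtain ⟨m, hm⟩ := h01
    have hM_eq : M = (E 0 1) ^ ((6:ℤ) * m) := by
      apply Subtype.ext
      rw [coe_S_zpow]
      ext i j
      fin_cases i <;> fin_cases j <;> simp
      · exact ha1
      · exact hm
      · exact hc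
      · exact hd1
    rw [hM_eq, show ((E 0 1 : SLZ2)) ^ ((6:ℤ) * m) = ((E 0 1) ^ (6:ℕ)) ^ m by
      rw [_root_.zpow_mul, show ((6:ℤ)) = ((6:ℕ):ℤ) by norm_num, zpow_natCast]]
    exact zpow_mem S6_mem_K m
  · -- inductive step : c ≠ 0
    obtain ⟨k1, hk1⟩ := exists_near ((M : Matrix (Fin 2) (Fin 2) ℤ) 0 0)
      (6 * (M : Matrix (Fin 2) (Fin 2) ℤ) 1 0) (by exact mul_ne_zero (by norm_num) hc)
    set c : ℤ := (M : Matrix (Fin 2) (Fin 2) ℤ) 1 0 with hcdef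
    set a' : ℤ := (M : Matrix (Fin 2) (Fin 2) ℤ) 0 0 + 6 * c * k1 with ha'def
    set N : SLZ2 := (E 0 1) ^ ((6:ℤ) * k1) * M with hNdef
    have coeN : (N : Matrix (Fin 2) (Fin 2) ℤ)
        = !![1, 6*k1; 0, 1] * (M : Matrix (Fin 2) (Fin 2) ℤ) := by
      rw [hNdef, Matrix.SpecialLinearGroup.coe_mul, coe_S_zpow]
    have hNa : (N : Matrix (Fin 2) (Fin 2) ℤ) 0 0 = a' := by
      rw [coeN, ha'def]
      simp [Matrix.mul_apply, Fin.sum_univ_two]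
      ring
    have hNc : (N : Matrix (Fin 2) (Fin 2) ℤ) 1 0 = c := by
      rw [coeN]
      simp [Matrix.mul_apply, Fin.sum_univ_two]
      rfl
    have hN_L : N ∈ Lgrp := mul_mem (S6k_mem_L k1) hM
    have hNa6 : (6:ℤ) ∣ a' - 1 := by
      have := ((mem_Lgrp N).mp hN_L).1
      rwa [hNa] at this
    have hNdet : a' * (N : Matrix (Fin 2) (Fin 2) ℤ) 1 1
        - (N : Matrix (Fin 2) (Fin 2) ℤ) 0 1 * c = 1 := by
      have := N.prop
      rw [Matrix.det_fin_two] at this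
      rwa [hNa, hNc] at this
    have excl : ∀ e : ℤ, (e = 2 ∨ e = -2 ∨ e = 3 ∨ e = -3) → a' ≠ e * c := by
      intro e he heq
      have h1 : c * (e * (N : Matrix (Fin 2) (Fin 2) ℤ) 1 1
          - (N : Matrix (Fin 2) (Fin 2) ℤ) 0 1) = 1 := by
        linear_combination hNdet - (N : Matrix (Fin 2) (Fin 2) ℤ) 1 1 * heq
      have hc1 : c = 1 ∨ c = -1 := Int.eq_one_or_neg_one_of_mul_eq_one h1
      rcases he with rfl | rfl | rfl | rfl <;> omega
    have hk1' : 2 * a'.natAbs ≤ ((6:ℤ) * c).natAbs := hk1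
    have key := zones a' c hc hNa6 hk1' (excl 2 (by norm_num)) (excl (-2) (by norm_num))
      (excl 3 (by norm_num)) (excl (-3) (by norm_num))
    have hMN : M = ((E 0 1) ^ ((6:ℤ) * k1))⁻¹ * N := by rw [hNdef]; group
    have hS6K : (E 0 1) ^ ((6:ℤ) * k1) ∈ Kgrp := by
      rw [show ((E 0 1 : SLZ2)) ^ ((6:ℤ) * k1) = ((E 0 1) ^ (6:ℕ)) ^ k1 by
        rw [_root_.zpow_mul, show ((6:ℤ)) = ((6:ℕ):ℤ) by norm_num, zpow_natCast]]
      exact zpow_mem S6_mem_K k1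
    have finish : N ∈ Kgrp → M ∈ Kgrp := by
      intro hNK
      rw [hMN]
      exact mul_mem (inv_mem hS6K) hNK
    rcases key with ⟨hpos, hlt⟩ | ⟨hpos, hlt⟩ | ⟨hpos, hlt⟩
    · -- use T^k2
      obtain ⟨k2, hk2⟩ := exists_near c a' (by omega)
      set M' : SLZ2 := (E 1 0) ^ k2 * N with hM'def
      have coeM' : (M' : Matrix (Fin 2) (Fin 2) ℤ)
          = !![1, 0; k2, 1] * (N : Matrix (Fin 2) (Fin 2) ℤ) := by
        rw [hM'def, Matrix.SpecialLinearGroup.coe_mul, coe_T_zpow]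
      have hM'c : (M' : Matrix (Fin 2) (Fin 2) ℤ) 1 0 = c + a' * k2 := by
        rw [coeM',
          show (!![1, 0; k2, 1] * (N : Matrix (Fin 2) (Fin 2) ℤ)) 1 0
            = k2 * ((N : Matrix (Fin 2) (Fin 2) ℤ) 0 0)
              + 1 * ((N : Matrix (Fin 2) (Fin 2) ℤ) 1 0) from by
                simp [Matrix.mul_apply, Fin.sum_univ_two],
          hNa, hNc]
        ring
      have hM'L : M' ∈ Lgrp := mul_mem (Tk_mem_L k2) hN_L
      have hM'lt : ((M' : Matrix (Fin 2) (Fin 2) ℤ) 1 0).natAbs < n := by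
        rw [hM'c]; omega
      have hM'K : M' ∈ Kgrp := ih _ hM'lt M' hM'L rfl
      apply finish
      rw [show N = ((E 1 0) ^ k2)⁻¹ * M' by rw [hM'def]; group]
      exact mul_mem (inv_mem (zpow_mem T_mem_K k2)) hM'K
    · -- use g3^k2
      obtain ⟨k2, hk2⟩ := exists_near c (2*(a' - 3*c)) (by omega)
      set M' : SLZ2 := g3 ^ k2 * N with hM'def
      have coeM' : (M' : Matrix (Fin 2) (Fin 2) ℤ)
          = !![1+6*k2, -18*k2; 2*k2, 1-6*k2] * (N : Matrix (Fin 2) (Fin 2) ℤ) := by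
        rw [hM'def, Matrix.SpecialLinearGroup.coe_mul, coe_g3_zpow]
      have hM'c : (M' : Matrix (Fin 2) (Fin 2) ℤ) 1 0 = c + 2*(a' - 3*c) * k2 := by
        rw [coeM',
          show (!![1+6*k2, -18*k2; 2*k2, 1-6*k2] * (N : Matrix (Fin 2) (Fin 2) ℤ)) 1 0
            = 2*k2 * ((N : Matrix (Fin 2) (Fin 2) ℤ) 0 0)
              + (1-6*k2) * ((N : Matrix (Fin 2) (Fin 2) ℤ) 1 0) from by
                simp [Matrix.mul_apply, Fin.sum_univ_two] <;> ring,
          hNa, hNc]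
        ring
      have hM'L : M' ∈ Lgrp := mul_mem (g3k_mem_L k2) hN_L
      have hM'lt : ((M' : Matrix (Fin 2) (Fin 2) ℤ) 1 0).natAbs < n := by
        rw [hM'c]; omega
      have hM'K : M' ∈ Kgrp := ih _ hM'lt M' hM'L rfl
      apply finish
      rw [show N = (g3 ^ k2)⁻¹ * M' by rw [hM'def]; group]
      exact mul_mem (inv_mem (zpow_mem g3_mem_K k2)) hM'K
    · -- use g4^k2
      obtain ⟨k2, hk2⟩ := exists_near c (2*(a' + 3*c)) (by omega)
      set M' : SLZ2 := g4 ^ k2 * N with hM'def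
      have coeM' : (M' : Matrix (Fin 2) (Fin 2) ℤ)
          = !![1-6*k2, -18*k2; 2*k2, 1+6*k2] * (N : Matrix (Fin 2) (Fin 2) ℤ) := by
        rw [hM'def, Matrix.SpecialLinearGroup.coe_mul, coe_g4_zpow]
      have hM'c : (M' : Matrix (Fin 2) (Fin 2) ℤ) 1 0 = c + 2*(a' + 3*c) * k2 := by
        rw [coeM',
          show (!![1-6*k2, -18*k2; 2*k2, 1+6*k2] * (N : Matrix (Fin 2) (Fin 2) ℤ)) 1 0
            = 2*k2 * ((N : Matrix (Fin 2) (Fin 2) ℤ) 0 0)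
              + (1+6*k2) * ((N : Matrix (Fin 2) (Fin 2) ℤ) 1 0) from by
                simp [Matrix.mul_apply, Fin.sum_univ_two] <;> ring,
          hNa, hNc]
        ring
      have hM'L : M' ∈ Lgrp := mul_mem (g4k_mem_L k2) hN_L
      have hM'lt : ((M' : Matrix (Fin 2) (Fin 2) ℤ) 1 0).natAbs < n := by
        rw [hM'c]; omega
      have hM'K : M' ∈ Kgrp := ih _ hM'lt M' hM'L rfl
      apply finish
      rw [show N = (g4 ^ k2)⁻¹ * M' by rw [hM'def]; group]
      exact mul_mem (inv_mem (zpow_mem g4_mem_K k2)) hM'K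

lemma L_le_K : Lgrp ≤ Kgrp := fun M hM => L_le_K_aux _ M hM rfl


lemma t6_mem_Gamma : (E 1 0) ^ (6:ℕ) ∈ Gamma 6 := by
  rw [mem_Gamma6_iff, coe_T_pow]
  norm_num

lemma s6_mem_Gamma : (E 0 1) ^ (6:ℕ) ∈ Gamma 6 := by
  rw [mem_Gamma6_iff, coe_S_pow]
  norm_num

lemma comm_mem_Gamma {δ ε : ℤ} (hδ : δ = 3 ∨ δ = -3) (hε : ε = 2 ∨ ε = -2) :
    ⁅(E 1 0) ^ δ, (E 0 1) ^ ε⁆ ∈ Gamma 6 := by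
  have h1 : ((E 1 0 : SLZ2) ^ δ)⁻¹ = (E 1 0) ^ (-δ) := by group
  have h2 : ((E 0 1 : SLZ2) ^ ε)⁻¹ = (E 0 1) ^ (-ε) := by group
  rw [mem_Gamma6_iff, commutatorElement_def, h1, h2]
  simp only [Matrix.SpecialLinearGroup.coe_mul, coe_T_zpow, coe_S_zpow]
  rcases hδ with rfl | rfl <;> rcases hε with rfl | rfl <;>
    norm_num [Matrix.mul_fin_two]

lemma gamma6_normal : (Gamma 6).Normal := MonoidHom.normal_ker _

lemma gens_sub_Gamma : gens ⊆ (Gamma 6 : Set SLZ2) := by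
  rintro x ((h1 | h2) | h3)
  · rw [Set.mem_singleton_iff] at h1
    subst h1
    exact t6_mem_Gamma
  · obtain ⟨m, hm, rfl⟩ := h2
    exact gamma6_normal.conj_mem _ s6_mem_Gamma _
  · obtain ⟨m, hm, δ, ε, hδ, hε, rfl⟩ := h3
    exact gamma6_normal.conj_mem _ (comm_mem_Gamma hδ hε) _

lemma H_le_Gamma : Hgrp ≤ Gamma 6 := (Subgroup.closure_le _).mpr gens_sub_Gamma

lemma Gamma6_le_L : Gamma 6 ≤ Lgrp := by
  intro M hM
  obtain ⟨h1, h2, h3, h4⟩ := (mem_Gamma6_iff M).mp hM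
  exact ⟨h1, h2, h4⟩

lemma t6_mem_H : (E 1 0) ^ (6:ℕ) ∈ Hgrp := Subgroup.subset_closure t6_mem_gens

lemma conj_up (X : SLZ2) (hX : ∀ m : ℕ, m ≤ 5 → (E 1 0)^m * X * ((E 1 0)^m)⁻¹ ∈ gens)
    (m : ℕ) (hm : m ≤ 5) :
    (E 1 0) * ((E 1 0)^m * X * ((E 1 0)^m)⁻¹) * (E 1 0)⁻¹ ∈ Hgrp := by
  have hXH : X ∈ Hgrp := by
    have := Subgroup.subset_closure (hX 0 (by norm_num))
    simpa [Hgrp] using this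
  by_cases h5 : m = 5
  · subst h5
    rw [show (E 1 0) * ((E 1 0)^5 * X * ((E 1 0)^5)⁻¹) * (E 1 0)⁻¹
        = (E 1 0)^(6:ℕ) * X * ((E 1 0)^(6:ℕ))⁻¹ by group]
    exact mul_mem (mul_mem t6_mem_H hXH) (inv_mem t6_mem_H)
  · rw [show (E 1 0) * ((E 1 0)^m * X * ((E 1 0)^m)⁻¹) * (E 1 0)⁻¹
        = (E 1 0)^(m+1) * X * ((E 1 0)^(m+1))⁻¹ by rw [pow_succ']; group]
    exact Subgroup.subset_closure (hX (m+1) (by omega))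

lemma conj_down (X : SLZ2) (hX : ∀ m : ℕ, m ≤ 5 → (E 1 0)^m * X * ((E 1 0)^m)⁻¹ ∈ gens)
    (m : ℕ) (hm : m ≤ 5) :
    (E 1 0)⁻¹ * ((E 1 0)^m * X * ((E 1 0)^m)⁻¹) * (E 1 0) ∈ Hgrp := by
  cases m with
  | zero =>
      rw [show (E 1 0)⁻¹ * ((E 1 0)^(0:ℕ) * X * ((E 1 0)^(0:ℕ))⁻¹) * (E 1 0)
          = ((E 1 0)^(6:ℕ))⁻¹ * ((E 1 0)^(5:ℕ) * X * ((E 1 0)^(5:ℕ))⁻¹) * (E 1 0)^(6:ℕ) by group]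
      exact mul_mem (mul_mem (inv_mem t6_mem_H)
        (Subgroup.subset_closure (hX 5 (by norm_num)))) t6_mem_H
  | succ m' =>
      rw [show (E 1 0)⁻¹ * ((E 1 0)^(m'+1) * X * ((E 1 0)^(m'+1))⁻¹) * (E 1 0)
          = (E 1 0)^m' * X * ((E 1 0)^m')⁻¹ by rw [pow_succ']; group]
      exact Subgroup.subset_closure (hX m' (by omega))

lemma conj_T_mem : ∀ x ∈ Hgrp, (E 1 0) * x * (E 1 0)⁻¹ ∈ Hgrp := by
  intro x hx
  refine Subgroup.closure_induction (p := fun y _ => (E 1 0) * y * (E 1 0)⁻¹ ∈ Hgrp)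
    ?_ ?_ ?_ ?_ hx
  · rintro y ((h1 | h2) | h3)
    · rw [Set.mem_singleton_iff] at h1
      subst h1
      rw [show (E 1 0) * (E 1 0)^(6:ℕ) * (E 1 0)⁻¹ = (E 1 0)^(6:ℕ) by group]
      exact t6_mem_H
    · obtain ⟨m, hm, rfl⟩ := h2
      exact conj_up _ (fun m hm => conj_s6_mem_gens hm) m hm
    · obtain ⟨m, hm, δ, ε, hδ, hε, rfl⟩ := h3
      exact conj_up _ (fun m hm => conj_comm_mem_gens hm hδ hε) m hm
  · show (E 1 0) * 1 * (E 1 0)⁻¹ ∈ Hgrp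
    rw [show (E 1 0) * 1 * (E 1 0)⁻¹ = 1 by group]
    exact one_mem _
  · intro a b _ _ pa pb
    rw [show (E 1 0) * (a * b) * (E 1 0)⁻¹
        = ((E 1 0) * a * (E 1 0)⁻¹) * ((E 1 0) * b * (E 1 0)⁻¹) by group]
    exact mul_mem pa pb
  · intro a _ pa
    rw [show (E 1 0) * a⁻¹ * (E 1 0)⁻¹ = ((E 1 0) * a * (E 1 0)⁻¹)⁻¹ by group]
    exact inv_mem pa

lemma conj_Tinv_mem : ∀ x ∈ Hgrp, (E 1 0)⁻¹ * x * (E 1 0) ∈ Hgrp := by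
  intro x hx
  refine Subgroup.closure_induction (p := fun y _ => (E 1 0)⁻¹ * y * (E 1 0) ∈ Hgrp)
    ?_ ?_ ?_ ?_ hx
  · rintro y ((h1 | h2) | h3)
    · rw [Set.mem_singleton_iff] at h1
      subst h1
      rw [show (E 1 0)⁻¹ * (E 1 0)^(6:ℕ) * (E 1 0) = (E 1 0)^(6:ℕ) by group]
      exact t6_mem_H
    · obtain ⟨m, hm, rfl⟩ := h2
      exact conj_down _ (fun m hm => conj_s6_mem_gens hm) m hm
    · obtain ⟨m, hm, δ, ε, hδ, hε, rfl⟩ := h3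
      exact conj_down _ (fun m hm => conj_comm_mem_gens hm hδ hε) m hm
  · show (E 1 0)⁻¹ * 1 * (E 1 0) ∈ Hgrp
    rw [show (E 1 0)⁻¹ * 1 * (E 1 0) = 1 by group]
    exact one_mem _
  · intro a b _ _ pa pb
    rw [show (E 1 0)⁻¹ * (a * b) * (E 1 0)
        = ((E 1 0)⁻¹ * a * (E 1 0)) * ((E 1 0)⁻¹ * b * (E 1 0)) by group]
    exact mul_mem pa pb
  · intro a _ pa
    rw [show (E 1 0)⁻¹ * a⁻¹ * (E 1 0) = ((E 1 0)⁻¹ * a * (E 1 0))⁻¹ by group]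
    exact inv_mem pa

lemma conj_Tz_mem : ∀ z : ℤ, ∀ x ∈ Hgrp, (E 1 0)^z * x * ((E 1 0)^z)⁻¹ ∈ Hgrp := by
  intro z
  induction z using Int.induction_on with
  | zero => intro x hx; simpa using hx
  | succ n ihn =>
      intro x hx
      rw [show (E 1 0)^((n:ℤ)+1) * x * ((E 1 0)^((n:ℤ)+1))⁻¹
          = (E 1 0) * ((E 1 0)^(n:ℤ) * x * ((E 1 0)^(n:ℤ))⁻¹) * (E 1 0)⁻¹ by group]
      exact conj_T_mem _ (ihn x hx)
  | pred n ihn =>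
      intro x hx
      rw [show (E 1 0)^(-(n:ℤ)-1) * x * ((E 1 0)^(-(n:ℤ)-1))⁻¹
          = (E 1 0)⁻¹ * ((E 1 0)^(-(n:ℤ)) * x * ((E 1 0)^(-(n:ℤ)))⁻¹) * (E 1 0) by group]
      exact conj_Tinv_mem _ (ihn x hx)

lemma K_decomp : ∀ x ∈ Kgrp, ∃ z : ℤ, x * (E 1 0)^z ∈ Hgrp := by
  intro x hx
  refine Subgroup.closure_induction (p := fun y _ => ∃ z : ℤ, y * (E 1 0)^z ∈ Hgrp)
    ?_ ?_ ?_ ?_ hx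
  · rintro y (rfl | hy)
    · exact ⟨-1, by rw [show (E 1 0) * (E 1 0)^(-1:ℤ) = 1 by group]; exact one_mem _⟩
    · exact ⟨0, by simpa [Hgrp] using Subgroup.subset_closure hy⟩
  · exact ⟨0, by simpa using one_mem Hgrp⟩
  · rintro a b _ _ ⟨z1, h1⟩ ⟨z2, h2⟩
    refine ⟨z2 + z1, ?_⟩
    rw [show a * b * (E 1 0)^(z2+z1)
        = (a * (E 1 0)^z1) * ((E 1 0)^(-z1) * (b * (E 1 0)^z2) * ((E 1 0)^(-z1))⁻¹) by group]
    exact mul_mem h1 (conj_Tz_mem (-z1) _ h2)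
  · rintro a _ ⟨z, h1⟩
    refine ⟨-z, ?_⟩
    have := conj_Tz_mem z _ (inv_mem h1)
    rwa [show (E 1 0)^z * (a * (E 1 0)^z)⁻¹ * ((E 1 0)^z)⁻¹ = a⁻¹ * (E 1 0)^(-z) by group]
      at this

end GammaSixProof

open GammaSixProof in
theorem gamma_six_two_generators :
    Gamma 6 =
      Subgroup.closure
        ({(E 1 0) ^ 6} ∪
         {x : SLZ2 | ∃ m : ℕ, m ≤ 5 ∧
            x = (E 1 0) ^ m * (E 0 1) ^ 6 * ((E 1 0) ^ m)⁻¹} ∪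
         {x : SLZ2 | ∃ m : ℕ, m ≤ 5 ∧ ∃ δ ε : ℤ,
            (δ = 3 ∨ δ = -3) ∧ (ε = 2 ∨ ε = -2) ∧
            x = (E 1 0) ^ m * ⁅(E 1 0) ^ δ, (E 0 1) ^ ε⁆ * ((E 1 0) ^ m)⁻¹}) := by
  show Gamma 6 = Hgrp
  apply le_antisymm
  · intro M hM
    have hK : M ∈ Kgrp := L_le_K (Gamma6_le_L hM)
    obtain ⟨z, hz⟩ := K_decomp M hK
    have hzG : (E 1 0)^z ∈ Gamma 6 := by
      have h1 : M * (E 1 0)^z ∈ Gamma 6 := H_le_Gamma hz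
      rw [show (E 1 0 : SLZ2)^z = M⁻¹ * (M * (E 1 0)^z) by group]
      exact mul_mem (inv_mem hM) h1
    have h6z : (6:ℤ) ∣ z := by
      have h := ((mem_Gamma6_iff _).mp hzG).2.2.1
      rw [coe_T_zpow] at h
      simpa using h
    obtain ⟨u, hu⟩ := h6z
    have hTz : (E 1 0)^z ∈ Hgrp := by
      rw [hu, show ((E 1 0 : SLZ2))^((6:ℤ)*u) = ((E 1 0)^(6:ℕ))^u by
        rw [_root_.zpow_mul, show ((6:ℤ)) = ((6:ℕ):ℤ) by norm_num, zpow_natCast]]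
      exact zpow_mem t6_mem_H u
    rw [show M = (M * (E 1 0)^z) * ((E 1 0)^z)⁻¹ by group]
    exact mul_mem hz (inv_mem hTz)
  · exact H_le_Gamma
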